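/- Let p be an odd prime and G = ⟨σ, τ : σ^{p²} = τ^p = 1, τ⁻¹στ = σ^{p+1}⟩ ≅ C_{p²} ⋊ C_p. Let M₁ = ⨁_{i=0}^{p−1} (ℤ/pℤ)·v_i with σ·v_i = v_{i+1} (indices mod p) and τ·v_i = −Σ_{l≠i} v_l. Then H¹(G/⟨σ^p⟩, M₁) ≅ ℤ/pℤ. -/

import Mathlib

open Finset groupCohomology

section Aux

variable {p : ℕ} [NeZero p]

private lemma aux_decomp (x : Fin p → ZMod p) :
    ∑ i, (x i).val • (Pi.single i (1 : ZMod p) : Fin p → ZMod p) = x := by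
  have h : ∀ i, (x i).val • (Pi.single i (1 : ZMod p) : Fin p → ZMod p)
      = Pi.single i (x i) := by
    intro i
    rw [← Pi.single_smul, nsmul_eq_mul, mul_one, ZMod.natCast_val, ZMod.cast_id]
  simp_rw [h]
  exact Finset.univ_sum_single x

private lemma aux_shift {Q : Type} [Group Q]
    (ρ : Representation ℤ Q (Fin p → ZMod p)) (s : Q)
    (hs : ∀ i, ρ s (Pi.single i 1) = Pi.single (i + 1) 1)
    (x : Fin p → ZMod p) (j : Fin p) : ρ s x j = x (j - 1) := by
  conv_lhs => rw [← aux_decomp x]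
  rw [map_sum]
  simp_rw [map_nsmul, hs]
  rw [Finset.sum_apply]
  rw [Fintype.sum_eq_single (j - 1)]
  · simp only [Pi.smul_apply, sub_add_cancel, Pi.single_eq_same, smul_eq_mul,
      nsmul_eq_mul, mul_one, ZMod.natCast_val, ZMod.cast_id]
  · intro i hi
    have : i + 1 ≠ j := fun h => hi (by rw [← h, add_sub_cancel_right])
    simp [Pi.single_eq_of_ne (Ne.symm this)]

private lemma aux_tau {Q : Type} [Group Q]
    (ρ : Representation ℤ Q (Fin p → ZMod p)) (t : Q)
    (ht : ∀ i, ρ t (Pi.single i 1) =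
      - ∑ l ∈ Finset.univ.erase i, Pi.single l (1 : ZMod p))
    (x : Fin p → ZMod p) (j : Fin p) : ρ t x j = x j - ∑ l, x l := by
  have ht' : ∀ i, ρ t (Pi.single i 1) =
      Pi.single i (1 : ZMod p) - fun _ => (1 : ZMod p) := by
    intro i
    rw [ht i, Finset.sum_erase_eq_sub (Finset.mem_univ i), neg_sub]
    congr 1
    exact Finset.univ_sum_single (fun _ => (1 : ZMod p))
  conv_lhs => rw [← aux_decomp x]
  rw [map_sum]
  simp_rw [map_nsmul, ht']
  rw [Finset.sum_apply]
  have : ∀ i : Fin p, ((x i).val • (Pi.single i (1 : ZMod p) - fun _ => (1 : ZMod p)) :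
        Fin p → ZMod p) j
      = (x i).val • (Pi.single i (1 : ZMod p) : Fin p → ZMod p) j - x i := by
    intro i
    simp only [Pi.smul_apply, Pi.sub_apply, smul_sub]
    congr 1
    simp [nsmul_eq_mul, ZMod.natCast_val, ZMod.cast_id]
  simp_rw [this]
  rw [Finset.sum_sub_distrib]
  congr 1
  rw [Fintype.sum_eq_single j]
  · simp [nsmul_eq_mul, ZMod.natCast_val, ZMod.cast_id]
  · intro i hi
    simp [Pi.single_eq_of_ne (Ne.symm hi)]

private lemma aux_val_add_one (hp1 : 1 < p) (j : Fin p) :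
    (((j + 1 : Fin p)).val : ZMod p) = (j.val : ZMod p) + 1 := by
  have h1 : ((1 : Fin p)).val = 1 := by
    rw [Fin.val_one']; exact Nat.mod_eq_of_lt hp1
  rw [Fin.add_def, h1, ZMod.natCast_mod]
  push_cast
  ring

private lemma aux_key (hp1 : 1 < p) (m : Fin p → ZMod p) :
    ∑ i : Fin p, (i.val : ZMod p) * (m (i - 1) - m i) = ∑ l, m l := by
  have h₁ : ∑ i : Fin p, (i.val : ZMod p) * m (i - 1)
      = ∑ j : Fin p, ((j.val : ZMod p) + 1) * m j := by
    refine Fintype.sum_equiv (Equiv.subRight (1 : Fin p)) _ _ fun i => ?_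
    simp only [Equiv.subRight_apply]
    congr 1
    rw [← aux_val_add_one hp1 (i - 1), sub_add_cancel]
  simp_rw [mul_sub]
  rw [Finset.sum_sub_distrib, h₁, ← Finset.sum_sub_distrib]
  simp_rw [add_mul, one_mul, add_sub_cancel_left]

end Aux

set_option maxHeartbeats 1000000 in
/-- Let `p` be an odd prime and `G = ⟨σ, τ : σ^(p²) = τ^p = 1, τ⁻¹στ = σ^(p+1)⟩ ≅ C_{p²} ⋊ C_p`.
Let `M₁ = ⨁_{i ∈ Fin p} (ℤ/p)·vᵢ` with (the image of) `σ` acting by `vᵢ ↦ v_{i+1}`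
(indices mod `p`) and (the image of) `τ` acting by `vᵢ ↦ -∑_{l ≠ i} v_l`, as a representation
of the quotient `G/⟨σ^p⟩`.  Then `H¹(G/⟨σ^p⟩, M₁) ≅ ℤ/pℤ`. -/
theorem h1_quotient_rep_iso_zmod_p
    (p : ℕ) [NeZero p] (hp : p.Prime) (hodd : Odd p)
    {G : Type} [Group G] (σ τ : G)
    (h1 : σ ^ (p ^ 2) = 1) (h2 : τ ^ p = 1) (h3 : τ⁻¹ * σ * τ = σ ^ (p + 1))
    (hgen : Subgroup.closure {σ, τ} = ⊤) (hcard : Nat.card G = p ^ 3)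
    [hN : (Subgroup.zpowers (σ ^ p)).Normal]
    (ρ : Representation ℤ (G ⧸ Subgroup.zpowers (σ ^ p)) (Fin p → ZMod p))
    (hρσ : ∀ i : Fin p, ρ (QuotientGroup.mk σ) (Pi.single i 1) = Pi.single (i + 1) 1)
    (hρτ : ∀ i : Fin p, ρ (QuotientGroup.mk τ) (Pi.single i 1) =
      - ∑ l ∈ Finset.univ.erase i, Pi.single l (1 : ZMod p)) :
    Nonempty (groupCohomology.H1 (Rep.of ρ) ≃ₗ[ℤ] ZMod p) := by
  open Fin.NatCast Fin.CommRing in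
  classical
  obtain ⟨n, rfl⟩ : ∃ n, p = n + 1 := ⟨p - 1, (Nat.succ_pred_eq_of_pos hp.pos).symm⟩
  have hp1 : 1 < n + 1 := hp.one_lt
  set s : G ⧸ Subgroup.zpowers (σ ^ (n+1)) := QuotientGroup.mk σ with hs_def
  set t : G ⧸ Subgroup.zpowers (σ ^ (n+1)) := QuotientGroup.mk τ with ht_def
  have hshift : ∀ (x : Fin (n+1) → ZMod (n+1)) (j : Fin (n+1)), ρ s x j = x (j - 1) :=
    aux_shift ρ s hρσ
  have htau : ∀ (x : Fin (n+1) → ZMod (n+1)) (j : Fin (n+1)), ρ t x j = x j - ∑ l, x l :=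
    aux_tau ρ t hρτ
  have hgenQ : ∀ (P : (G ⧸ Subgroup.zpowers (σ ^ (n+1))) → Prop), P s → P t → P 1 →
      (∀ g, P g → P g⁻¹) → (∀ g h', P g → P h' → P (g * h')) → ∀ g, P g := by
    intro P hPs hPt hP1 hPinv hPmul g
    obtain ⟨g, rfl⟩ := QuotientGroup.mk'_surjective (Subgroup.zpowers (σ ^ (n+1))) g
    have hg : g ∈ Subgroup.closure ({σ, τ} : Set G) := hgen ▸ Subgroup.mem_top g
    refine Subgroup.closure_induction (p := fun x _ => P (QuotientGroup.mk x)) ?_ hP1 ?_ ?_ hg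
    · rintro x (rfl | rfl)
      · exact hPs
      · exact hPt
    · intro x y _ _ hx hy; exact hPmul _ _ hx hy
    · intro x _ hx; exact hPinv _ hx
  have hw : ∀ g, ρ g (fun _ => (1 : ZMod (n+1))) = fun _ => (1 : ZMod (n+1)) := by
    refine hgenQ (fun g => ρ g (fun _ => 1) = fun _ => 1) ?_ ?_ ?_ ?_ ?_
    · funext j; rw [hshift]
    · funext j
      rw [htau]
      simp only [Finset.sum_const, Finset.card_univ, Fintype.card_fin, nsmul_eq_mul, mul_one,
        ZMod.natCast_self, sub_zero]
    · show ((ρ 1) fun _ => (1 : ZMod (n+1))) = fun _ => 1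
      rw [map_one]; rfl
    · intro g hg
      conv_lhs => rw [← hg]
      rw [← Module.End.mul_apply, ← map_mul, inv_mul_cancel, map_one]; rfl
    · intro g h' hg hh'
      rw [map_mul, Module.End.mul_apply, hh', hg]
  have hAρ : ∀ g (x : Fin (n+1) → ZMod (n+1)), (Rep.of ρ).ρ g x = ρ g x := fun _ _ => rfl
  let Φ : groupCohomology.cocycles₁ (Rep.of ρ) →ₗ[ℤ] ZMod (n+1) :=
  { toFun := fun f => (∑ i : Fin (n+1), (i.val : ZMod (n+1)) * f.1 s i) + f.1 t 0
    map_add' := by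
      intro f g
      have h2 : ∀ q i, (f + g).1 q i = f.1 q i + g.1 q i := fun q i => rfl
      simp only [h2, mul_add, Finset.sum_add_distrib]
      ring
    map_smul' := by
      intro z f
      have h2 : ∀ q i, (z • f).1 q i = (z : ZMod (n+1)) * f.1 q i := fun q i => by
        show z • (f.1 q i) = _
        rw [zsmul_eq_mul]
      simp only [h2, RingHom.id_apply, zsmul_eq_mul]
      rw [mul_add, Finset.mul_sum]
      congr 1
      exact Finset.sum_congr rfl fun i _ => by ring }
  have hΦcob : ∀ f : groupCohomology.cocycles₁ (Rep.of ρ),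
      (f : _ → _) ∈ groupCohomology.coboundaries₁ (Rep.of ρ) → f ∈ LinearMap.ker Φ := by
    intro f hf
    obtain ⟨m, hm0⟩ := hf
    have hm : ∀ g, (Rep.of ρ).ρ g m - m = f.1 g := fun g => by
      rw [← groupCohomology.d₀₁_hom_apply]; exact congrFun hm0 g
    rw [LinearMap.mem_ker]
    have hms : ∀ i : Fin (n+1), f.1 s i = m (i - 1) - m i := by
      intro i
      have h5 : ((Rep.of ρ).ρ s m - m) i = f.1 s i :=
        congrArg (fun (v : Fin (n+1) → ZMod (n+1)) => v i) (hm s)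
      rw [← h5]
      show ρ s m i - m i = _
      rw [hshift]
    have hmt : f.1 t 0 = - ∑ l, m l := by
      have h5 : ((Rep.of ρ).ρ t m - m) 0 = f.1 t 0 :=
        congrArg (fun (v : Fin (n+1) → ZMod (n+1)) => v 0) (hm t)
      rw [← h5]
      show ρ t m 0 - m 0 = _
      rw [htau]; ring
    show (∑ i : Fin (n+1), (i.val : ZMod (n+1)) * f.1 s i) + f.1 t 0 = 0
    simp only [hms, hmt]
    rw [aux_key hp1]
    ring
  have hΦker : ∀ f : groupCohomology.cocycles₁ (Rep.of ρ),
      f ∈ LinearMap.ker Φ → (f : _ → _) ∈ groupCohomology.coboundaries₁ (Rep.of ρ) := by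
    intro f hf
    rw [LinearMap.mem_ker] at hf
    set F : (G ⧸ Subgroup.zpowers (σ ^ (n+1))) → Fin (n+1) → ZMod (n+1) := f.1 with hF_def
    have hf' : (∑ i : Fin (n+1), (i.val : ZMod (n+1)) * F s i) + F t 0 = 0 := hf
    have hcoc : ∀ g h', F (g * h') = ρ g (F h') + F g :=
      fun g h' => (groupCohomology.mem_cocycles₁_iff (A := Rep.of ρ) f.1).1 f.2 g h'
    have h0' : F (1 : G ⧸ Subgroup.zpowers (σ ^ (n+1))) = 0 :=
      groupCohomology.cocycles₁_map_one f
    have hsp : s ^ (n+1) = 1 := by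
      rw [hs_def, ← QuotientGroup.mk_pow]
      exact (QuotientGroup.eq_one_iff _).2 (Subgroup.mem_zpowers _)
    have hpow : ∀ (nn : ℕ), ∀ (j : Fin (n+1)), F (s ^ nn) j
        = ∑ k ∈ Finset.range nn, F s (j - (k : Fin (n+1))) := by
      intro nn
      induction nn with
      | zero =>
        intro j
        rw [pow_zero, Finset.range_zero, Finset.sum_empty, h0']
        rfl
      | succ k ih =>
        intro j
        have hstep : F (s ^ (k+1)) = ρ s (F (s ^ k)) + F s := by
          rw [pow_succ']
          exact hcoc s (s ^ k)
        have hstep' : F (s ^ (k+1)) j = ρ s (F (s ^ k)) j + F s j := by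
          rw [hstep]; rfl
        rw [hstep', hshift, ih]
        rw [Finset.sum_range_succ']
        congr 1
        · refine Finset.sum_congr rfl fun k' _ => ?_
          congr 1
          push_cast
          ring
        · congr 1
          simp
    have hasum : ∑ i : Fin (n+1), F s i = 0 := by
      have h0 : F (1 : G ⧸ Subgroup.zpowers (σ ^ (n+1))) 0
          = ∑ k ∈ Finset.range (n+1), F s (0 - (k : Fin (n+1))) := by
        rw [← hsp]; exact hpow (n+1) 0
      rw [h0'] at h0
      have h0'' : (0 : ZMod (n+1)) = ∑ k ∈ Finset.range (n+1), F s (0 - (k : Fin (n+1))) := h0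
      have hre : ∑ i : Fin (n+1), F s i
          = ∑ i : Fin (n+1), F s (0 - i) :=
        Fintype.sum_equiv (Equiv.neg (Fin (n+1))) _ _ (fun i => by simp [zero_sub])
      have hre2 : ∑ i : Fin (n+1), F s (0 - i)
          = ∑ k ∈ Finset.range (n+1), F s (0 - (k : Fin (n+1))) := by
        rw [← Fin.sum_univ_eq_sum_range (fun k => F s (0 - (k : Fin (n+1)))) (n+1)]
        simp [Fin.cast_val_eq_self]
      rw [hre, hre2, ← h0'']
    have hst : s * t = t * s := by
      rw [hs_def, ht_def, ← QuotientGroup.mk_mul, ← QuotientGroup.mk_mul, QuotientGroup.eq]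
      have hinv : τ⁻¹ * σ⁻¹ * τ = (σ ^ (n+1+1))⁻¹ := by rw [← h3]; group
      have hcommσ : σ * (σ ^ (n+1))⁻¹ = (σ ^ (n+1))⁻¹ * σ :=
        (((Commute.refl σ).pow_right (n+1)).inv_right).eq
      have hcalc : (σ * τ)⁻¹ * (τ * σ) = (σ ^ (n+1))⁻¹ := by
        have e : (σ * τ)⁻¹ * (τ * σ) = (τ⁻¹ * σ⁻¹ * τ) * σ := by group
        rw [e, hinv, pow_succ, mul_inv_rev, mul_assoc, ← hcommσ, ← mul_assoc,
          inv_mul_cancel, one_mul]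
      rw [hcalc]
      exact Subgroup.inv_mem _ (Subgroup.mem_zpowers _)
    have hbconst : ∀ j : Fin (n+1), F t j = F t 0 := by
      have hrel : ∀ j : Fin (n+1), F t (j - 1) = F t j := by
        intro j
        have e1 := hcoc s t
        have e2 := hcoc t s
        rw [hst] at e1
        have e3 := e1.symm.trans e2
        have e5 : F t (j - 1) + F s j = (F s j - ∑ l, F s l) + F t j := by
          have e4 : (ρ s (F t) + F s) j = (ρ t (F s) + F t) j := by rw [e3]
          rw [← hshift (F t) j, ← htau (F s) j]
          exact e4
        rw [hasum, sub_zero] at e5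
        linear_combination e5
      have hnat : ∀ k : ℕ, F t ((k : Fin (n+1))) = F t 0 := by
        intro k
        induction k with
        | zero => norm_num
        | succ k ih =>
          have hh := hrel (((k+1 : ℕ)) : Fin (n+1))
          rw [show (((k+1:ℕ)) : Fin (n+1)) - 1 = ((k : ℕ) : Fin (n+1)) by push_cast; ring] at hh
          rw [← hh, ih]
      intro j
      have := hnat j.val
      rwa [Fin.cast_val_eq_self] at this
    have hb0 : F t 0 = - ∑ i : Fin (n+1), (i.val : ZMod (n+1)) * F s i := by
      linear_combination hf'
    set m : Fin (n+1) → ZMod (n+1) :=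
      fun j => -∑ k ∈ Finset.range j.val, F s ((k : Fin (n+1)) + 1) with hm_def
    have hm1 : ∀ j : Fin (n+1), m (j - 1) - m j = F s j := by
      intro j
      by_cases hj : j = 0
      · subst hj
        have hval : ((0 : Fin (n+1)) - 1).val = n := by
          rw [Fin.coe_sub_one]; simp
        show (-∑ k ∈ Finset.range ((0 - 1 : Fin (n+1))).val, F s ((k : Fin (n+1)) + 1))
            - (-∑ k ∈ Finset.range ((0 : Fin (n+1)).val), F s ((k : Fin (n+1)) + 1))
            = F s 0
        rw [hval]
        have hsum2 : ∑ k ∈ Finset.range (n+1), F s ((k : Fin (n+1))) = 0 := by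
          rw [← Fin.sum_univ_eq_sum_range (fun k => F s ((k : Fin (n+1)))) (n+1)]
          simpa [Fin.cast_val_eq_self] using hasum
        rw [Finset.sum_range_succ'] at hsum2
        simp only [Fin.val_zero, Finset.range_zero, Finset.sum_empty, neg_zero, sub_zero]
        have hca : ∀ k : ℕ, ((k+1 : ℕ) : Fin (n+1)) = ((k : Fin (n+1)) + 1) := fun k =>
          Nat.cast_add_one _
        simp only [hca] at hsum2
        rw [show (((0:ℕ)) : Fin (n+1)) = 0 from by norm_num] at hsum2
        linear_combination -hsum2
      · have hvj : (j - 1).val = j.val - 1 := by rw [Fin.coe_sub_one, if_neg hj]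
        have hjpos : 0 < j.val := by
          rcases Nat.eq_zero_or_pos j.val with h | h
          · exact absurd (Fin.ext h : j = 0) hj
          · exact h
        show (-∑ k ∈ Finset.range ((j - 1 : Fin (n+1))).val, F s ((k : Fin (n+1)) + 1))
            - (-∑ k ∈ Finset.range (j.val), F s ((k : Fin (n+1)) + 1))
            = F s j
        rw [hvj]
        have hsplit : ∑ k ∈ Finset.range j.val, F s ((k : Fin (n+1)) + 1)
            = ∑ k ∈ Finset.range (j.val - 1), F s ((k : Fin (n+1)) + 1)
              + F s (((j.val - 1 : ℕ) : Fin (n+1)) + 1) := by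
          conv_lhs => rw [show j.val = (j.val - 1) + 1 from (Nat.succ_pred_eq_of_pos hjpos).symm]
          rw [Finset.sum_range_succ]
        rw [hsplit]
        have hidx : (((j.val - 1 : ℕ) : Fin (n+1)) + 1) = j := by
          rw [show (((j.val - 1 : ℕ) : Fin (n+1)) + 1) = (((j.val - 1 + 1 : ℕ)) : Fin (n+1)) by
            push_cast; ring]
          rw [show j.val - 1 + 1 = j.val from Nat.succ_pred_eq_of_pos hjpos,
            Fin.cast_val_eq_self]
        rw [hidx]
        ring
    have hm2 : ∑ l, m l = ∑ i : Fin (n+1), (i.val : ZMod (n+1)) * F s i := by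
      rw [← aux_key hp1 m]
      exact Finset.sum_congr rfl fun i _ => by rw [hm1 i]
    have hcb : ∀ g, ρ g m - m = F g := by
      refine hgenQ (fun g => ρ g m - m = F g) ?_ ?_ ?_ ?_ ?_
      · funext j
        show ρ s m j - m j = F s j
        rw [hshift]
        exact hm1 j
      · funext j
        show ρ t m j - m j = F t j
        rw [htau, hbconst j, hb0, hm2]
        ring
      · show ρ 1 m - m = F 1
        rw [h0', map_one]
        show m - m = (0 : Fin (n+1) → ZMod (n+1))
        simp
      · intro g hg
        have hg' : ρ g m - m = F g := hg
        show ρ g⁻¹ m - m = F g⁻¹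
        have h6 : ρ g⁻¹ (F g) = -(F g⁻¹) := by
          have h6' := groupCohomology.cocycles₁_map_inv f g⁻¹
          rw [inv_inv] at h6'
          exact h6'
        have h8 : ρ g⁻¹ (ρ g m - m) = -(F g⁻¹) := by rw [hg']; exact h6
        rw [map_sub] at h8
        have h9 : ρ g⁻¹ (ρ g m) = m := by
          rw [← Module.End.mul_apply, ← map_mul, inv_mul_cancel, map_one, Module.End.one_apply]
        rw [h9] at h8
        have h10 : F g⁻¹ = ρ g⁻¹ m - m := by
          rw [← neg_sub m (ρ g⁻¹ m), h8, neg_neg]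
        rw [h10]
      · intro g h' hg hh'
        have hg' : ρ g m - m = F g := hg
        have hh'' : ρ h' m - m = F h' := hh'
        show ρ (g * h') m - m = F (g * h')
        rw [hcoc g h', ← hg', ← hh'', map_sub, map_mul, Module.End.mul_apply]
        abel
    exact ⟨m, funext fun g => by rw [groupCohomology.d₀₁_hom_apply]; exact hcb g⟩
  have hΦsurj : Function.Surjective Φ := by
    -- conjugation formula
    have hconj : ∀ nn : ℕ, (τ⁻¹)^nn * σ * τ^nn = σ ^ ((n+1+1)^nn) := by
      intro nn
      induction nn with
      | zero => simp
      | succ k ih =>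
        have h4 : (τ⁻¹)^(k+1) * σ * τ^(k+1) = (τ⁻¹)^k * (τ⁻¹ * σ * τ) * τ^k := by
          rw [pow_succ, pow_succ']
          group
        rw [h4, h3]
        have h5 : (τ⁻¹)^k * σ^(n+1+1) * τ^k = ((τ⁻¹)^k * σ * τ^k)^(n+1+1) := by
          have hti : τ^k = ((τ⁻¹)^k)⁻¹ := by rw [inv_pow, inv_inv]
          rw [hti, conj_pow]
        rw [h5, ih, ← pow_mul, ← pow_succ]
    have hτinv : τ⁻¹ = τ^n := by
      have hh : τ^n * τ = 1 := by rw [← pow_succ, h2]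
      exact (eq_inv_of_mul_eq_one_left hh).symm
    have hτeq : τ = (τ⁻¹)^n := by rw [inv_pow, ← hτinv, inv_inv]
    have hτστ : τ * σ * τ⁻¹ = σ ^ ((n+1+1)^n) := by
      calc τ * σ * τ⁻¹ = (τ⁻¹)^n * σ * τ^n := by rw [← hτeq, ← hτinv]
      _ = σ ^ ((n+1+1)^n) := hconj n
    -- zpowers σ is normal
    haveI hNσ : (Subgroup.zpowers σ).Normal := by
      rw [← Subgroup.normalizer_eq_top_iff, eq_top_iff, ← hgen, Subgroup.closure_le]
      rintro x (rfl | rfl)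
      · exact Subgroup.le_normalizer (Subgroup.mem_zpowers x)
      · rw [SetLike.mem_coe, Subgroup.mem_normalizer_iff]
        intro h
        constructor
        · rintro ⟨k, rfl⟩
          rw [show x * σ^k * x⁻¹ = (x * σ * x⁻¹)^k from (conj_zpow).symm, hτστ]
          exact Subgroup.zpow_mem _ (Subgroup.pow_mem _ (Subgroup.mem_zpowers σ) _) _
        · intro hmem
          obtain ⟨k, hk⟩ := hmem
          have hk' : σ ^ k = x * h * x⁻¹ := hk
          have hh : h = x⁻¹ * σ^k * x := by rw [hk']; group
          have h9 : x⁻¹ * σ^k * (x⁻¹)⁻¹ = (x⁻¹ * σ * (x⁻¹)⁻¹)^k := conj_zpow.symm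
          rw [inv_inv] at h9
          rw [hh, h9, h3]
          exact Subgroup.zpow_mem _ (Subgroup.pow_mem _ (Subgroup.mem_zpowers σ) _) _
    set π : G →* G ⧸ Subgroup.zpowers σ := QuotientGroup.mk' (Subgroup.zpowers σ) with hπ_def
    have hπσ : π σ = 1 := (QuotientGroup.eq_one_iff σ).2 (Subgroup.mem_zpowers σ)
    have hπτp : (π τ) ^ (n+1) = 1 := by rw [← map_pow, h2, map_one]
    have hord : orderOf (π τ) = n+1 := by
      have hdvd : orderOf (π τ) ∣ n+1 := orderOf_dvd_of_pow_eq_one hπτp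
      rcases (Nat.Prime.eq_one_or_self_of_dvd hp _ hdvd) with h | h
      · exfalso
        have hτmem : τ ∈ Subgroup.zpowers σ :=
          (QuotientGroup.eq_one_iff τ).1 (orderOf_eq_one_iff.1 h)
        have htop : (⊤ : Subgroup G) ≤ Subgroup.zpowers σ := by
          rw [← hgen, Subgroup.closure_le]
          rintro x (rfl | rfl)
          · exact Subgroup.mem_zpowers x
          · exact hτmem
        obtain ⟨k, hk⟩ := hτmem
        have hcomm : τ⁻¹ * σ * τ = σ := by rw [← hk]; group
        have hσp : σ ^ (n+1) = 1 := by
          have he : σ ^ (n+1) * σ = σ := by rw [← pow_succ, ← h3, hcomm]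
          have := mul_right_cancel (b := σ) (he.trans (one_mul σ).symm)
          exact this
        have hordσ : orderOf σ ∣ n+1 := orderOf_dvd_of_pow_eq_one hσp
        have hzt : Subgroup.zpowers σ = ⊤ := le_antisymm le_top htop
        have hcards : Nat.card G = orderOf σ := by
          rw [← Nat.card_zpowers, hzt, Subgroup.card_top]
        rw [hcard] at hcards
        have hle : (n+1)^3 ≤ n+1 := by
          rw [hcards]
          exact Nat.le_of_dvd hp.pos hordσ
        rw [show (n+1)^3 = (n+1)*(n+1)*(n+1) from by ring] at hle
        nlinarith [hp.two_le]
      · exact h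
    have hπτgen : ∀ q : G ⧸ Subgroup.zpowers σ, q ∈ Subgroup.zpowers (π τ) := by
      intro q
      obtain ⟨g, rfl⟩ := QuotientGroup.mk'_surjective (Subgroup.zpowers σ) q
      have hg : g ∈ Subgroup.closure ({σ, τ} : Set G) := hgen ▸ Subgroup.mem_top g
      refine Subgroup.closure_induction
        (p := fun x _ => π x ∈ Subgroup.zpowers (π τ)) ?_ ?_ ?_ ?_ hg
      · rintro x (rfl | rfl)
        · show π x ∈ Subgroup.zpowers (π τ)
          rw [hπσ]; exact one_mem _
        · exact Subgroup.mem_zpowers _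
      · show π (1 : G) ∈ Subgroup.zpowers (π τ)
        rw [map_one]; exact one_mem _
      · intro x y _ _ hx hy
        have hx' : π x ∈ Subgroup.zpowers (π τ) := hx
        have hy' : π y ∈ Subgroup.zpowers (π τ) := hy
        show π (x * y) ∈ Subgroup.zpowers (π τ)
        rw [map_mul]; exact mul_mem hx' hy'
      · intro x _ hx
        have hx' : π x ∈ Subgroup.zpowers (π τ) := hx
        show π x⁻¹ ∈ Subgroup.zpowers (π τ)
        rw [map_inv]; exact inv_mem hx'
    let e : Multiplicative (ZMod (n+1)) →* G ⧸ Subgroup.zpowers σ :=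
    { toFun := fun x => (π τ) ^ ((Multiplicative.toAdd x).val)
      map_one' := by
        show (π τ) ^ ((Multiplicative.toAdd (1 : Multiplicative (ZMod (n+1)))).val) = 1
        rw [toAdd_one, ZMod.val_zero, pow_zero]
      map_mul' := by
        intro x y
        show (π τ) ^ ((Multiplicative.toAdd (x * y)).val)
          = (π τ) ^ ((Multiplicative.toAdd x).val) * (π τ) ^ ((Multiplicative.toAdd y).val)
        rw [toAdd_mul, ZMod.val_add, ← pow_add]
        exact pow_eq_pow_iff_modEq.2 (by rw [hord]; exact Nat.mod_modEq _ _) }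
    have hebij : Function.Bijective e := by
      constructor
      · intro x y hxy
        have hmod : (Multiplicative.toAdd x).val ≡ (Multiplicative.toAdd y).val
            [MOD orderOf (π τ)] := pow_eq_pow_iff_modEq.1 hxy
        rw [hord] at hmod
        have hx := ZMod.val_lt (Multiplicative.toAdd x)
        have hy := ZMod.val_lt (Multiplicative.toAdd y)
        have hveq : (Multiplicative.toAdd x).val = (Multiplicative.toAdd y).val := by
          rwa [Nat.ModEq, Nat.mod_eq_of_lt hx, Nat.mod_eq_of_lt hy] at hmod
        have := ZMod.val_injective (n+1) hveq
        exact Multiplicative.toAdd.injective this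
      · intro q
        obtain ⟨k, hk⟩ := hπτgen q
        refine ⟨Multiplicative.ofAdd ((k : ZMod (n+1))), ?_⟩
        show (π τ) ^ ((Multiplicative.toAdd (Multiplicative.ofAdd ((k : ZMod (n+1))))).val) = q
        rw [toAdd_ofAdd, ← hk, ← zpow_natCast, zpow_eq_zpow_iff_modEq, hord]
        refine (ZMod.intCast_eq_intCast_iff _ _ _).1 ?_
        push_cast
        rw [ZMod.natCast_val, ZMod.cast_id]
    let E := MulEquiv.ofBijective e hebij
    let χ' : G →* Multiplicative (ZMod (n+1)) := E.symm.toMonoidHom.comp π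
    have hkill : ∀ x ∈ Subgroup.zpowers (σ ^ (n+1)), χ' x = 1 := by
      intro x hx
      obtain ⟨k, hk⟩ := hx
      have hmem : x ∈ Subgroup.zpowers σ := by
        have hk' : (σ ^ (n+1)) ^ k = x := hk
        rw [← hk']
        exact Subgroup.zpow_mem _ (Subgroup.pow_mem _ (Subgroup.mem_zpowers σ) _) _
      show E.symm (π x) = 1
      have hone : π x = 1 := (QuotientGroup.eq_one_iff x).2 hmem
      rw [hone, map_one]
    let χQ : (G ⧸ Subgroup.zpowers (σ ^ (n+1))) →* Multiplicative (ZMod (n+1)) :=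
      QuotientGroup.lift (Subgroup.zpowers (σ ^ (n+1))) χ' hkill
    have hχs : χQ s = 1 := by
      rw [hs_def]
      show E.symm (π σ) = 1
      rw [hπσ, map_one]
    have hχt : χQ t = Multiplicative.ofAdd (1 : ZMod (n+1)) := by
      rw [ht_def]
      show E.symm (π τ) = Multiplicative.ofAdd (1 : ZMod (n+1))
      rw [MulEquiv.symm_apply_eq]
      show π τ = (π τ) ^ ((Multiplicative.toAdd (Multiplicative.ofAdd (1 : ZMod (n+1)))).val)
      rw [toAdd_ofAdd, ZMod.val_one'' (by omega : n + 1 ≠ 1), pow_one]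
    -- the cocycle χQ • w
    have hconst : ∀ (c : ZMod (n+1)) (g : G ⧸ Subgroup.zpowers (σ ^ (n+1))),
        ρ g (fun _ => c) = fun _ => c := by
      intro c g
      have h4 : (fun (_ : Fin (n+1)) => c) = c.val • (fun _ => (1 : ZMod (n+1))) := by
        funext i
        simp [nsmul_eq_mul, ZMod.natCast_val, ZMod.cast_id]
      rw [h4, map_nsmul, hw]
    have hmem₀ : (fun q (_ : Fin (n+1)) => ((Multiplicative.toAdd (χQ q)) : ZMod (n+1)))
        ∈ groupCohomology.cocycles₁ (Rep.of ρ) := by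
      rw [groupCohomology.mem_cocycles₁_iff]
      intro g h'
      show (fun (_ : Fin (n+1)) => (Multiplicative.toAdd (χQ (g * h')) : ZMod (n+1)))
        = ρ g (fun _ => (Multiplicative.toAdd (χQ h') : ZMod (n+1)))
          + (fun _ => (Multiplicative.toAdd (χQ g) : ZMod (n+1)))
      rw [hconst]
      funext i
      show (Multiplicative.toAdd (χQ (g * h')) : ZMod (n+1))
        = Multiplicative.toAdd (χQ h') + Multiplicative.toAdd (χQ g)
      rw [map_mul, toAdd_mul]
      ring
    set f₀ : groupCohomology.cocycles₁ (Rep.of ρ) := ⟨_, hmem₀⟩ with hf₀_def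
    have hΦf₀ : Φ f₀ = 1 := by
      show (∑ i : Fin (n+1), (i.val : ZMod (n+1)) * f₀.1 s i) + f₀.1 t 0 = 1
      have hv1 : ∀ i : Fin (n+1), f₀.1 s i = 0 := by
        intro i
        show (Multiplicative.toAdd (χQ s) : ZMod (n+1)) = 0
        rw [hχs, toAdd_one]
      have hv2 : f₀.1 t 0 = 1 := by
        show (Multiplicative.toAdd (χQ t) : ZMod (n+1)) = 1
        rw [hχt, toAdd_ofAdd]
      simp only [hv1, hv2, mul_zero, Finset.sum_const_zero, zero_add]
    intro c
    refine ⟨(c.val : ℤ) • f₀, ?_⟩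
    rw [LinearMap.map_smul, hΦf₀, zsmul_eq_mul, mul_one]
    push_cast
    rw [ZMod.natCast_val, ZMod.cast_id]
  have hsurjπ : Function.Surjective (groupCohomology.H1π (Rep.of ρ)).hom :=
    (ModuleCat.epi_iff_surjective _).1 inferInstance
  have hkereq : LinearMap.ker (groupCohomology.H1π (Rep.of ρ)).hom = LinearMap.ker Φ := by
    ext f
    rw [LinearMap.mem_ker, groupCohomology.H1π_eq_zero_iff]
    exact ⟨fun h => hΦcob f h, fun h => hΦker f h⟩
  exact ⟨(((groupCohomology.H1π (Rep.of ρ)).hom.quotKerEquivOfSurjective hsurjπ).symm.trans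
    (Submodule.quotEquivOfEq _ _ hkereq)).trans
    (Φ.quotKerEquivOfSurjective hΦsurj)⟩
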